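/- Assume N ≥ 5. Let (i,j), (i',j') ∈ Ŝ with (i,j) ≠ (0,0), let a ∈ A, and suppose there exists η ∈ (U¹ ∪ {σ^-}) ∩ Γ(σ_{(i,j)}^a) with I(η) = (i',j'). Then lim_{κ→∞} Q_κ(η | σ_{(i,j)}, a) exists and equals 1 if η = σ_{(i,j)}^a, and equals Σ_{ω∈Ω(σ_{(i,j)}^a, η)} Π_{ℓ=0}^{|ω|−1} 1/|Δ(ω_ℓ)| otherwise, where ω_ℓ denotes the ℓ-th configuration of the downhill path ω and |ω| its length. -/

import Mathlib

open Filter Topology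

namespace IsingS

open scoped Classical

variable (N : ℕ) [NeZero N]

/-- Vertex set: the N×N discrete torus. -/
abbrev V := ZMod N × ZMod N

/-- Configurations: `true` encodes spin +1, `false` encodes spin -1. -/
abbrev Cfg := V N → Bool

/-- The spin value in ℤ of a Boolean spin. -/
def spin (b : Bool) : ℤ := if b then 1 else -1

/-- The four nearest neighbors of a vertex. -/
def nbrFinset (i : V N) : Finset (V N) :=
  {i + ((1 : ZMod N), (0 : ZMod N)), i + ((-1 : ZMod N), (0 : ZMod N)),
   i + ((0 : ZMod N), (1 : ZMod N)), i + ((0 : ZMod N), (-1 : ZMod N))}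

/-- The Hamiltonian with external magnetic field `h`. -/
noncomputable def H (h : ℝ) (σ : Cfg N) : ℝ :=
  -(1/2) * (((∑ i : V N, ∑ j ∈ nbrFinset N i, spin (σ i) * spin (σ j)) : ℤ) : ℝ)
    - h * (((∑ i : V N, spin (σ i)) : ℤ) : ℝ)

/-- Flip the spin at vertex `i`. -/
def flip (σ : Cfg N) (i : V N) : Cfg N := Function.update σ i (!σ i)

/-- Spin `i` is susceptible in `σ` if flipping it does not increase the energy. -/
def susceptible (h : ℝ) (σ : Cfg N) (i : V N) : Prop :=
  H N h (flip N σ i) ≤ H N h σ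

/-- A configuration is robust if it has no susceptible spins. -/
def robust (h : ℝ) (σ : Cfg N) : Prop := ∀ i : V N, ¬ susceptible N h σ i

/-- The set of robust configurations. -/
noncomputable def Uset (h : ℝ) : Finset (Cfg N) :=
  Finset.univ.filter (fun σ => robust N h σ)

/-- Metropolis rate of flipping spin `i` from `σ` at inverse temperature `β`. -/
noncomputable def metroRate (h β : ℝ) (σ : Cfg N) (i : V N) : ℝ :=
  (1 / (N : ℝ) ^ 2) * min 1 (Real.exp (-β * (H N h (flip N σ i) - H N h σ)))

/-- The Metropolis transition matrix at inverse temperature `β`. -/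
noncomputable def pβ (h β : ℝ) (σ η : Cfg N) : ℝ :=
  if η = σ then 1 - ∑ i : V N, metroRate N h β σ i
  else ∑ i ∈ Finset.univ.filter (fun i => flip N σ i = η), metroRate N h β σ i

/-- The low-temperature dynamics `p̃ = lim_{β→∞} p_β`. -/
noncomputable def ptilde (h : ℝ) (σ η : Cfg N) : ℝ :=
  limUnder atTop (fun β : ℝ => pβ N h β σ η)

/-- The low-temperature dynamics as a matrix. -/
noncomputable def Pmat (h : ℝ) : Matrix (Cfg N) (Cfg N) ℝ :=
  fun σ η => ptilde N h σ η

/-- κ-step low-temperature transition probabilities, started from the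
post-decision configuration of action `a` (an element of `V ∪ {0}`,
encoded as `Option (V N)` with `none` playing the role of `0`). -/
abbrev Act := Option (V N)

/-- Post-decision configuration. -/
def post (σ : Cfg N) : Act N → Cfg N
  | none => σ
  | some i => flip N σ i

/-- `P̃_κ(η | σ, a)`. -/
noncomputable def Ptilκ (h : ℝ) (κ : ℕ) (σ : Cfg N) (a : Act N) (η : Cfg N) : ℝ :=
  (Pmat N h ^ κ) (post N σ a) η

/-- `Q_κ(η | σ, a)`, the κ-step probabilities conditioned on ending in a robust
configuration (with the convention 0/0 = 0). -/
noncomputable def Qκ (h : ℝ) (κ : ℕ) (σ : Cfg N) (a : Act N) (η : Cfg N) : ℝ :=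
  if robust N h η then
    Ptilκ N h κ σ a η / ∑ η' ∈ Uset N h, Ptilκ N h κ σ a η'
  else 0

/-- The set of susceptible spins of `σ`. -/
noncomputable def deltaSet (h : ℝ) (σ : Cfg N) : Finset (V N) :=
  Finset.univ.filter (fun i => susceptible N h σ i)

/-- The all-minus configuration. -/
def minusCfg : Cfg N := fun _ => false

/-- The set of spins in state +1. -/
def plusSet (σ : Cfg N) : Set (V N) := {v | σ v = true}

/-- The nearest-neighbor graph on the torus. -/
def torusGraph : SimpleGraph (V N) :=
  SimpleGraph.fromRel (fun i j =>
    j = i + ((1 : ZMod N), (0 : ZMod N)) ∨ j = i + ((0 : ZMod N), (1 : ZMod N)))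

/-- The +1 spins of `σ` form a single (nonempty, connected) cluster. -/
def singleCluster (σ : Cfg N) : Prop :=
  ((torusGraph N).induce (plusSet N σ)).Connected

/-- The +1 spins of `σ` form an `i × j` rectangle. -/
def isRect (σ : Cfg N) (i j : ℕ) : Prop :=
  ∃ x₀ y₀ : ZMod N, plusSet N σ =
    {p : V N | ∃ x < i, ∃ y < j, p = (x₀ + (x : ZMod N), y₀ + (y : ZMod N))}

/-- `U¹`: robust configurations, different from the all-minus configuration,
whose +1 spins form a single cluster. -/
def U1 (h : ℝ) (σ : Cfg N) : Prop :=
  robust N h σ ∧ σ ≠ minusCfg N ∧ singleCluster N σ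

/-- Side lengths in `{2, …, N-2} ∪ {N}`. -/
def goodIdx (n i : ℕ) : Prop := (2 ≤ i ∧ i ≤ n - 2) ∨ i = n

/-- The auxiliary state space `Ŝ`. -/
def ShatP (n : ℕ) (p : ℕ × ℕ) : Prop :=
  (goodIdx n p.1 ∧ goodIdx n p.2) ∨ p = (0, 0)

/-- One downhill step: a single spin flip that does not increase the energy. -/
def stepRel (h : ℝ) (σ η : Cfg N) : Prop :=
  (∃ i : V N, η = flip N σ i) ∧ H N h η ≤ H N h σ

/-- `l` is a downhill path from `σ` to `η` (encoded as the list of its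
configurations `[σ_0, …, σ_ℓ]`). -/
def IsPathBetween (h : ℝ) (σ η : Cfg N) (l : List (Cfg N)) : Prop :=
  l.head? = some σ ∧ l.getLast? = some η ∧ l.Chain' (stepRel N h)

/-- `η` is a downhill configuration of `σ` (i.e. `η ∈ Γ(σ)`). -/
def downhillOf (h : ℝ) (σ η : Cfg N) : Prop :=
  η = σ ∨ ∃ l : List (Cfg N), IsPathBetween N h σ η l

/-- The weight `Π_{ℓ=0}^{|ω|-1} 1/|Δ(ω_ℓ)|` of a downhill path. -/
noncomputable def pathWeight (h : ℝ) (l : List (Cfg N)) : ℝ :=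
  (l.dropLast.map (fun τ => ((deltaSet N h τ).card : ℝ)⁻¹)).prod

/-- `I(η) = p`: the all-minus configuration corresponds to `(0,0)`, and a
configuration of `U¹` whose +1 spins form an `i×j` rectangle corresponds to `(i,j)`. -/
def Irel (h : ℝ) (η : Cfg N) (p : ℕ × ℕ) : Prop :=
  (η = minusCfg N ∧ p = (0, 0)) ∨ (U1 N h η ∧ isRect N η p.1 p.2)

/-- `σ_{(i,j)}`: the configuration whose +1 spins are exactly
`{(x, y) : 0 ≤ x < i, 0 ≤ y < j}`. -/
def sigmaRect (i j : ℕ) : Cfg N := fun v => decide (v.1.val < i ∧ v.2.val < j)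

section A
set_option linter.unusedSectionVars false
variable {N : ℕ} [NeZero N]

lemma spin_not (b : Bool) : spin (!b) = - spin b := by cases b <;> simp [spin]

lemma spin_ne_zero (b : Bool) : spin b ≠ 0 := by cases b <;> simp [spin]

lemma flip_apply_self (σ : Cfg N) (i : V N) : flip N σ i i = !σ i := by
  simp [flip]

lemma flip_apply_ne (σ : Cfg N) {i v : V N} (hv : v ≠ i) : flip N σ i v = σ v := by
  simp [flip, Function.update_of_ne hv]

lemma flip_ne (σ : Cfg N) (i : V N) : flip N σ i ≠ σ := by
  intro hc
  have := congrFun hc i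
  rw [flip_apply_self] at this
  cases σ i <;> simp_all

lemma flip_inj (σ : Cfg N) {i i' : V N} (hc : flip N σ i = flip N σ i') : i = i' := by
  by_contra hne
  have := congrFun hc i
  rw [flip_apply_self] at this
  rw [flip_apply_ne σ (fun hh : i = i' => hne hh)] at this
  cases σ i <;> simp_all

lemma mem_nbr_symm {i v : V N} : v ∈ nbrFinset N i ↔ i ∈ nbrFinset N v := by
  simp only [nbrFinset, Finset.mem_insert, Finset.mem_singleton]
  constructor <;>
  · rintro (rfl | rfl | rfl | rfl)
    · right; left; simp [add_assoc]
    · left; simp [add_assoc]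
    · right; right; right; simp [add_assoc]
    · right; right; left; simp [add_assoc]

lemma one_ne_zero' (hN : 5 ≤ N) : (1 : ZMod N) ≠ 0 := by
  haveI : Fact (1 < N) := ⟨by omega⟩
  exact one_ne_zero

lemma not_mem_nbr_self (hN : 5 ≤ N) (i : V N) : i ∉ nbrFinset N i := by
  have h1 : (1 : ZMod N) ≠ 0 := one_ne_zero' hN
  simp only [nbrFinset, Finset.mem_insert, Finset.mem_singleton]
  push_neg
  refine ⟨?_, ?_, ?_, ?_⟩ <;>
  · intro hc
    rw [left_eq_add, Prod.ext_iff] at hc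
    simp only [Prod.fst, Prod.snd] at hc
    first
    | exact h1 hc.1
    | exact h1 (neg_eq_zero.mp hc.1)
    | exact h1 hc.2
    | exact h1 (neg_eq_zero.mp hc.2)

end A
section B
set_option linter.unusedSectionVars false
variable {N : ℕ} [NeZero N]

lemma mag_flip (σ : Cfg N) (i : V N) :
    (∑ v : V N, spin (flip N σ i v)) = (∑ v : V N, spin (σ v)) - 2 * spin (σ i) := by
  have hfun : (fun v => spin (flip N σ i v))
      = Function.update (fun v => spin (σ v)) i (spin (!σ i)) := by
    funext v
    by_cases hv : v = i
    · subst hv; rw [flip_apply_self, Function.update_self]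
    · rw [flip_apply_ne σ hv, Function.update_of_ne hv]
  rw [hfun, Finset.sum_update_of_mem (Finset.mem_univ i),
    Finset.sum_sdiff_eq_sub (Finset.singleton_subset_iff.mpr (Finset.mem_univ i)),
    Finset.sum_singleton, spin_not]
  ring

lemma inter_flip (hN : 5 ≤ N) (σ : Cfg N) (i : V N) :
    (∑ v : V N, ∑ w ∈ nbrFinset N v, spin (flip N σ i v) * spin (flip N σ i w))
    = (∑ v : V N, ∑ w ∈ nbrFinset N v, spin (σ v) * spin (σ w))
      - 4 * spin (σ i) * ∑ w ∈ nbrFinset N i, spin (σ w) := by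
  set t : V N → ℤ := fun v => spin (flip N σ i v) with ht
  set s : V N → ℤ := fun v => spin (σ v) with hs
  have ht_i : t i = -s i := by rw [ht, hs]; simp only [flip_apply_self, spin_not]
  have ht_ne : ∀ v, v ≠ i → t v = s v := by
    intro v hv; rw [ht, hs]; simp only [flip_apply_ne σ hv]
  have hii : i ∉ nbrFinset N i := not_mem_nbr_self hN i
  have key : ∀ v, v ≠ i → (∑ w ∈ nbrFinset N v, t v * t w)
      = (∑ w ∈ nbrFinset N v, s v * s w)
        + (if i ∈ nbrFinset N v then s v * (-2 * s i) else 0) := by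
    intro v hv
    have : ∀ w ∈ nbrFinset N v, t v * t w
        = s v * s w + (if w = i then s v * (-2 * s i) else 0) := by
      intro w _
      by_cases hw : w = i
      · subst hw
        rw [ht_ne v hv, ht_i, if_pos rfl]; ring
      · rw [ht_ne v hv, ht_ne w hw, if_neg hw]; ring
    rw [Finset.sum_congr rfl this, Finset.sum_add_distrib,
      Finset.sum_ite_eq' (nbrFinset N v) i (fun _ => s v * (-2 * s i))]
  have keyi : (∑ w ∈ nbrFinset N i, t i * t w)
      = (∑ w ∈ nbrFinset N i, s i * s w) + (-2 * s i) * ∑ w ∈ nbrFinset N i, s w := by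
    have : ∀ w ∈ nbrFinset N i, t i * t w = s i * s w + (-2 * s i) * s w := by
      intro w hw
      have hwne : w ≠ i := by intro hc; rw [hc] at hw; exact hii hw
      rw [ht_i, ht_ne w hwne]; ring
    rw [Finset.sum_congr rfl this, Finset.sum_add_distrib]
    congr 1
    rw [Finset.mul_sum]
  -- split the outer sums at i
  rw [← Finset.sum_erase_add Finset.univ _ (Finset.mem_univ i),
    ← Finset.sum_erase_add Finset.univ (fun v => ∑ w ∈ nbrFinset N v, s v * s w)
      (Finset.mem_univ i), keyi]
  have herase : (∑ v ∈ Finset.univ.erase i, ∑ w ∈ nbrFinset N v, t v * t w)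
      = (∑ v ∈ Finset.univ.erase i, ∑ w ∈ nbrFinset N v, s v * s w)
        + ∑ v ∈ Finset.univ.erase i, (if i ∈ nbrFinset N v then s v * (-2 * s i) else 0) := by
    rw [← Finset.sum_add_distrib]
    refine Finset.sum_congr rfl ?_
    intro v hv
    exact key v (Finset.ne_of_mem_erase hv)
  rw [herase]
  have hfilter : (Finset.univ.erase i).filter (fun v => i ∈ nbrFinset N v)
      = nbrFinset N i := by
    ext v
    simp only [Finset.mem_filter, Finset.mem_erase, Finset.mem_univ, true_and]
    constructor
    · rintro ⟨_, hv⟩; exact mem_nbr_symm.mpr hv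
    · intro hv
      have hvne : v ≠ i := by intro hc; rw [hc] at hv; exact hii hv
      exact ⟨⟨hvne, trivial⟩, mem_nbr_symm.mp hv⟩
  have hsum2 : ∑ v ∈ Finset.univ.erase i, (if i ∈ nbrFinset N v then s v * (-2 * s i) else 0)
      = (-2 * s i) * ∑ w ∈ nbrFinset N i, s w := by
    rw [← Finset.sum_filter, hfilter, ← Finset.sum_mul]
    ring
  rw [hsum2]
  ring

lemma H_flip_sub (hN : 5 ≤ N) (h : ℝ) (σ : Cfg N) (i : V N) :
    H N h (flip N σ i) - H N h σ
      = 2 * ((spin (σ i) * ∑ w ∈ nbrFinset N i, spin (σ w) : ℤ) : ℝ)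
        + 2 * h * ((spin (σ i) : ℤ) : ℝ) := by
  unfold H
  rw [inter_flip hN σ i, mag_flip σ i]
  push_cast
  ring

lemma H_flip_ne (hN : 5 ≤ N) {h : ℝ} (hh0 : 0 < h) (hh1 : h < 1)
    (σ : Cfg N) (i : V N) : H N h (flip N σ i) ≠ H N h σ := by
  intro hc
  have hd := H_flip_sub hN h σ i
  rw [hc, sub_self] at hd
  set K : ℤ := ∑ w ∈ nbrFinset N i, spin (σ w) with hK
  have hs := spin_ne_zero (σ i)
  have h2 : (spin (σ i) : ℝ) * ((K : ℝ) + h) = 0 := by push_cast at hd ⊢; linarith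
  have hsR : ((spin (σ i) : ℤ) : ℝ) ≠ 0 := Int.cast_ne_zero.mpr hs
  have h3 : (K : ℝ) + h = 0 := by
    rcases mul_eq_zero.mp h2 with h' | h'
    · exact absurd h' hsR
    · exact h'
  rcases le_or_gt 0 K with hK0 | hK0
  · have : (0:ℝ) ≤ (K:ℝ) := by exact_mod_cast hK0
    linarith
  · have h4 : K ≤ -1 := by omega
    have : (K:ℝ) ≤ ((-1:ℤ):ℝ) := Int.cast_le.mpr h4
    push_cast at this
    linarith

lemma susceptible_lt (hN : 5 ≤ N) {h : ℝ} (hh0 : 0 < h) (hh1 : h < 1)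
    {σ : Cfg N} {i : V N} (hsus : susceptible N h σ i) :
    H N h (flip N σ i) < H N h σ :=
  lt_of_le_of_ne hsus (H_flip_ne hN hh0 hh1 σ i)

lemma minus_robust (hN : 5 ≤ N) {h : ℝ} (hh0 : 0 < h) (hh1 : h < 1) :
    robust N h (minusCfg N) := by
  intro i hsus
  have hd := H_flip_sub hN h (minusCfg N) i
  have hKle : (∑ w ∈ nbrFinset N i, spin (minusCfg N w) : ℤ) ≤ -1 := by
    have : ∀ w ∈ nbrFinset N i, spin (minusCfg N w) = -1 := by
      intro w _; rfl
    rw [Finset.sum_congr rfl this, Finset.sum_const]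
    have hcard : 1 ≤ (nbrFinset N i).card := by
      refine Finset.card_pos.mpr ⟨i + ((1 : ZMod N), (0 : ZMod N)), ?_⟩
      simp [nbrFinset]
    have : (1:ℤ) ≤ ((nbrFinset N i).card : ℤ) := by exact_mod_cast hcard
    rw [nsmul_eq_mul]
    nlinarith
  have hspin : spin (minusCfg N i) = -1 := rfl
  rw [hspin] at hd
  push_cast at hd
  have hKR : ((∑ w ∈ nbrFinset N i, spin (minusCfg N w) : ℤ) : ℝ) ≤ -1 := by
    exact_mod_cast hKle
  push_cast at hKR
  unfold susceptible at hsus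
  linarith

end B
section C
set_option linter.unusedSectionVars false
variable {N : ℕ} [NeZero N]

lemma Npos : (0:ℝ) < (N:ℝ)^2 := by
  have : 0 < N := Nat.pos_of_ne_zero (NeZero.ne N)
  positivity

lemma tendsto_metroRate (h : ℝ) (σ : Cfg N) (i : V N) :
    Tendsto (fun β : ℝ => metroRate N h β σ i) atTop
      (𝓝 (if susceptible N h σ i then 1/(N:ℝ)^2 else 0)) := by
  by_cases hsus : susceptible N h σ i
  · rw [if_pos hsus]
    have heq : ∀ᶠ β : ℝ in atTop, metroRate N h β σ i = 1/(N:ℝ)^2 := by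
      filter_upwards [eventually_ge_atTop (0:ℝ)] with β hβ
      unfold metroRate
      have hd : H N h (flip N σ i) - H N h σ ≤ 0 := by
        unfold susceptible at hsus; linarith
      have : (1:ℝ) ≤ Real.exp (-β * (H N h (flip N σ i) - H N h σ)) := by
        rw [Real.one_le_exp_iff]
        nlinarith
      rw [min_eq_left this, mul_one]
    exact Tendsto.congr' (heq.mono fun β hβ => hβ.symm) tendsto_const_nhds
  · rw [if_neg hsus]
    have hd : 0 < H N h (flip N σ i) - H N h σ := by
      unfold susceptible at hsus; push_neg at hsus; linarith
    have h1 : Tendsto (fun β : ℝ => Real.exp (-β * (H N h (flip N σ i) - H N h σ)))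
        atTop (𝓝 0) := by
      apply Real.tendsto_exp_atBot.comp
      have harg : Tendsto (fun β : ℝ => -β * (H N h (flip N σ i) - H N h σ)) atTop atBot := by
        have h2 := Filter.Tendsto.atTop_mul_const hd (tendsto_id (α := ℝ) (x := atTop))
        have h3 := tendsto_neg_atTop_atBot.comp h2
        refine h3.congr fun β => ?_
        simp only [Function.comp_apply, id_eq]
        ring
      exact harg
    have h2 : Tendsto (fun β : ℝ => min 1 (Real.exp (-β * (H N h (flip N σ i) - H N h σ))))
        atTop (𝓝 0) := by
      have hmin := (tendsto_const_nhds (x := (1:ℝ)) (f := atTop (α := ℝ))).min h1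
      simpa using hmin
    have := h2.const_mul (1/(N:ℝ)^2)
    simpa [metroRate] using this
end C
section D
set_option linter.unusedSectionVars false
variable {N : ℕ} [NeZero N]

lemma Pmat_self (h : ℝ) (σ : Cfg N) :
    Pmat N h σ σ = 1 - ((deltaSet N h σ).card : ℝ) / (N:ℝ)^2 := by
  have hten : Tendsto (fun β : ℝ => pβ N h β σ σ) atTop
      (𝓝 (1 - ((deltaSet N h σ).card : ℝ) / (N:ℝ)^2)) := by
    have hsum : Tendsto (fun β : ℝ => ∑ i : V N, metroRate N h β σ i) atTop
        (𝓝 (∑ i : V N, if susceptible N h σ i then 1/(N:ℝ)^2 else 0)) :=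
      tendsto_finset_sum _ (fun i _ => tendsto_metroRate h σ i)
    have hval : (∑ i : V N, if susceptible N h σ i then 1/(N:ℝ)^2 else 0)
        = ((deltaSet N h σ).card : ℝ) / (N:ℝ)^2 := by
      rw [← Finset.sum_filter]
      simp only [Finset.sum_const, deltaSet, nsmul_eq_mul]
      ring
    have := (tendsto_const_nhds (x := (1:ℝ)) (f := atTop (α := ℝ))).sub hsum
    rw [hval] at this
    refine this.congr fun β => ?_
    simp [pβ]
  exact hten.limUnder_eq

lemma Pmat_flip (h : ℝ) (σ : Cfg N) (i : V N) :
    Pmat N h σ (flip N σ i) = if susceptible N h σ i then 1/(N:ℝ)^2 else 0 := by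
  have hpβ : ∀ β, pβ N h β σ (flip N σ i) = metroRate N h β σ i := by
    intro β
    unfold pβ
    rw [if_neg (flip_ne σ i)]
    have : Finset.univ.filter (fun i' => flip N σ i' = flip N σ i) = {i} := by
      ext i'
      simp only [Finset.mem_filter, Finset.mem_univ, true_and, Finset.mem_singleton]
      exact ⟨fun hc => flip_inj σ hc, fun hc => by rw [hc]⟩
    rw [this, Finset.sum_singleton]
  have := (tendsto_metroRate h σ i).congr (fun β => (hpβ β).symm)
  exact this.limUnder_eq

lemma Pmat_other (h : ℝ) (σ η : Cfg N) (hη : η ≠ σ) (hflip : ∀ i, flip N σ i ≠ η) :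
    Pmat N h σ η = 0 := by
  have hpβ : ∀ β, pβ N h β σ η = 0 := by
    intro β
    unfold pβ
    rw [if_neg hη]
    have : Finset.univ.filter (fun i' => flip N σ i' = η) = ∅ := by
      ext i'
      simp only [Finset.mem_filter, Finset.mem_univ, true_and, Finset.notMem_empty,
        iff_false]
      exact hflip i'
    rw [this, Finset.sum_empty]
  have : Tendsto (fun β : ℝ => pβ N h β σ η) atTop (𝓝 0) := by
    refine tendsto_const_nhds.congr fun β => (hpβ β).symm
  exact this.limUnder_eq

lemma card_V : (Fintype.card (V N) : ℝ) = (N:ℝ)^2 := by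
  simp [Fintype.card_prod, ZMod.card]
  ring

lemma deltaSet_card_le (h : ℝ) (σ : Cfg N) :
    ((deltaSet N h σ).card : ℝ) ≤ (N:ℝ)^2 := by
  rw [← card_V]
  exact_mod_cast Finset.card_le_card (Finset.subset_univ _)

lemma Pmat_self_nonneg (h : ℝ) (σ : Cfg N) : 0 ≤ Pmat N h σ σ := by
  rw [Pmat_self]
  have h1 := deltaSet_card_le (N := N) h σ
  have h2 := Npos (N := N)
  rw [sub_nonneg, div_le_one h2]
  exact h1

lemma Pmat_robust_row (h : ℝ) {σ : Cfg N} (hrob : robust N h σ) (η : Cfg N) :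
    Pmat N h σ η = if η = σ then 1 else 0 := by
  by_cases hη : η = σ
  · subst hη
    rw [if_pos rfl, Pmat_self]
    have : deltaSet N h η = ∅ := by
      ext i; simp [deltaSet, hrob i]
    rw [this]
    simp
  · rw [if_neg hη]
    by_cases hf : ∃ i, flip N σ i = η
    · obtain ⟨i, rfl⟩ := hf
      rw [Pmat_flip, if_neg (hrob i)]
    · push_neg at hf
      exact Pmat_other h σ η hη hf

/-- Key decomposition of a one-step average. -/
lemma Pmat_row_decomp (h : ℝ) (σ : Cfg N) (x : Cfg N → ℝ) :
    (∑ τ : Cfg N, Pmat N h σ τ * x τ)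
      = Pmat N h σ σ * x σ
        + ∑ i ∈ deltaSet N h σ, (1/(N:ℝ)^2) * x (flip N σ i) := by
  rw [← Finset.sum_erase_add Finset.univ _ (Finset.mem_univ σ), add_comm]
  congr 1
  have himg : (deltaSet N h σ).image (flip N σ) ⊆ Finset.univ.erase σ := by
    intro τ hτ
    obtain ⟨i, _, rfl⟩ := Finset.mem_image.mp hτ
    exact Finset.mem_erase.mpr ⟨flip_ne σ i, Finset.mem_univ _⟩
  rw [← Finset.sum_subset himg ?van]
  · rw [Finset.sum_image ?inj]
    · refine Finset.sum_congr rfl fun i hi => ?_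
      rw [Pmat_flip, if_pos (by simpa [deltaSet] using hi)]
    · intro a _ b _ hab
      exact flip_inj σ hab
  · intro τ hτ hτn
    have hτσ : τ ≠ σ := (Finset.mem_erase.mp hτ).1
    by_cases hf : ∃ i, flip N σ i = τ
    · obtain ⟨i, rfl⟩ := hf
      have hns : ¬ susceptible N h σ i := by
        intro hsus
        exact hτn (Finset.mem_image.mpr ⟨i, by simpa [deltaSet] using hsus, rfl⟩)
      rw [Pmat_flip, if_neg hns, zero_mul]
    · push_neg at hf
      rw [Pmat_other h σ τ hτσ hf, zero_mul]

end D
section E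
set_option linter.unusedSectionVars false
variable {N : ℕ} [NeZero N]

lemma pow_apply_succ (h : ℝ) (κ : ℕ) (σ η : Cfg N) :
    (Pmat N h ^ (κ+1)) σ η = ∑ τ : Cfg N, Pmat N h σ τ * (Pmat N h ^ κ) τ η := by
  rw [pow_succ', Matrix.mul_apply]

lemma pow_robust_row (h : ℝ) {σ : Cfg N} (hrob : robust N h σ) (κ : ℕ) (η : Cfg N) :
    (Pmat N h ^ κ) σ η = if η = σ then 1 else 0 := by
  induction κ with
  | zero => simp [Matrix.one_apply, eq_comm]
  | succ κ ih =>
    rw [pow_apply_succ]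
    have : ∀ τ : Cfg N, Pmat N h σ τ * (Pmat N h ^ κ) τ η
        = if τ = σ then (Pmat N h ^ κ) σ η else 0 := by
      intro τ
      rw [Pmat_robust_row h hrob]
      by_cases hτ : τ = σ
      · subst hτ; simp
      · simp [hτ]
    rw [Finset.sum_congr rfl (fun τ _ => this τ), Finset.sum_ite_eq' Finset.univ σ]
    simp [ih]

lemma tendsto_recur {q : ℝ} (hq0 : 0 ≤ q) (hq1 : q < 1) {x c : ℕ → ℝ} {L : ℝ}
    (hx : ∀ κ, x (κ+1) = q * x κ + c κ) (hc : Tendsto c atTop (𝓝 L)) :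
    Tendsto x atTop (𝓝 (L / (1-q))) := by
  set s : ℝ := L / (1-q) with hs
  have h1q : 0 < 1 - q := by linarith
  have hLs : (1 - q) * s = L := by
    rw [hs]; field_simp
  set e : ℕ → ℝ := fun κ => x κ - s with he
  set d : ℕ → ℝ := fun κ => c κ - L with hd
  have hrec : ∀ κ, e (κ+1) = q * e κ + d κ := by
    intro κ
    simp only [he, hd, hx κ]
    linarith [hLs]
  have hd0 : Tendsto d atTop (𝓝 0) := by
    have := hc.sub (tendsto_const_nhds (x := L))
    simpa using this
  have he0 : Tendsto e atTop (𝓝 0) := by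
    rw [Metric.tendsto_atTop]
    intro ε hε
    have hε2 : 0 < ε * (1-q) / 2 := by positivity
    obtain ⟨K, hK⟩ := (Metric.tendsto_atTop.mp hd0) (ε * (1-q) / 2) hε2
    have hbound : ∀ n : ℕ, |e (K + n)| ≤ q^n * |e K| + ε/2 := by
      intro n
      induction n with
      | zero => simp; linarith [abs_nonneg (e K)]
      | succ n ih =>
        have hKn : K + n ≥ K := Nat.le_add_right K n
        have hdK := hK (K + n) hKn
        rw [Real.dist_eq, sub_zero] at hdK
        have : e (K + (n+1)) = q * e (K + n) + d (K + n) := by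
          have := hrec (K + n)
          convert this using 2 <;> omega
        calc |e (K + (n+1))| = |q * e (K + n) + d (K + n)| := by rw [this]
          _ ≤ |q * e (K + n)| + |d (K + n)| := abs_add_le _ _
          _ = q * |e (K + n)| + |d (K + n)| := by
              rw [abs_mul, abs_of_nonneg hq0]
          _ ≤ q * (q^n * |e K| + ε/2) + ε * (1-q)/2 := by
              have := le_of_lt hdK
              nlinarith [abs_nonneg (e (K+n))]
          _ = q^(n+1) * |e K| + (q * ε/2 + ε * (1-q)/2) := by ring
          _ ≤ q^(n+1) * |e K| + ε/2 := by nlinarith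
    have hq_pow : Tendsto (fun n : ℕ => q^n * |e K|) atTop (𝓝 0) := by
      have := (tendsto_pow_atTop_nhds_zero_of_lt_one hq0 hq1).mul_const (|e K|)
      simpa using this
    obtain ⟨M, hM⟩ := (Metric.tendsto_atTop.mp hq_pow) (ε/2) (by positivity)
    refine ⟨K + M, fun m hm => ?_⟩
    have hmK : K ≤ m := le_trans (Nat.le_add_right K M) hm
    have hmn : m = K + (m - K) := by omega
    have hMn : M ≤ m - K := by omega
    have h1 := hbound (m - K)
    have h2 := hM (m - K) hMn
    rw [Real.dist_eq, sub_zero] at h2 ⊢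
    rw [← hmn] at h1
    have h3 : q^(m-K) * |e K| < ε/2 := lt_of_le_of_lt (le_abs_self _) h2
    linarith
  have h5 : Tendsto (fun κ => e κ + s) atTop (𝓝 (0 + s)) :=
    he0.add tendsto_const_nhds
  rw [zero_add] at h5
  refine h5.congr fun κ => ?_
  simp [he]

end E
section F
set_option linter.unusedSectionVars false
variable {N : ℕ} [NeZero N]

lemma stepRel_lt (hN : 5 ≤ N) {h : ℝ} (hh0 : 0 < h) (hh1 : h < 1)
    {σ τ : Cfg N} (hst : stepRel N h σ τ) : H N h τ < H N h σ := by
  obtain ⟨⟨i, rfl⟩, hle⟩ := hst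
  exact lt_of_le_of_ne hle (H_flip_ne hN hh0 hh1 σ i)

lemma path_nodup (hN : 5 ≤ N) {h : ℝ} (hh0 : 0 < h) (hh1 : h < 1)
    {σ η : Cfg N} {l : List (Cfg N)} (hl : IsPathBetween N h σ η l) : l.Nodup := by
  obtain ⟨-, -, hchain⟩ := hl
  have hc : l.Chain' (fun a b => H N h b < H N h a) :=
    hchain.imp fun a b hab => stepRel_lt hN hh0 hh1 hab
  haveI : IsTrans (Cfg N) (fun a b => H N h b < H N h a) :=
    ⟨fun _ _ _ h1 h2 => lt_trans h2 h1⟩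
  have hp := List.isChain_iff_pairwise.mp hc
  exact hp.imp fun {a b} hab => by
    intro hc'; subst hc'; exact lt_irrefl _ hab

lemma pathSet_finite (hN : 5 ≤ N) {h : ℝ} (hh0 : 0 < h) (hh1 : h < 1)
    (σ η : Cfg N) : {l : List (Cfg N) | IsPathBetween N h σ η l}.Finite := by
  have hsub : {l : List (Cfg N) | IsPathBetween N h σ η l}
      ⊆ {l : List (Cfg N) | l.Nodup} := fun l hl => path_nodup hN hh0 hh1 hl
  refine Set.Finite.subset ?_ hsub
  haveI : Fintype {l : List (Cfg N) // l.Nodup} := fintypeNodupList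
  haveI : Finite ↥{l : List (Cfg N) | l.Nodup} :=
    Finite.of_fintype {l : List (Cfg N) // l.Nodup}
  exact Set.toFinite _

/-- The path sum appearing in the theorem. -/
noncomputable def PathSum (h : ℝ) (σ η : Cfg N) : ℝ :=
  ∑' l : {l : List (Cfg N) // IsPathBetween N h σ η l}, pathWeight N h l.1

lemma PathSum_eq_finset (hN : 5 ≤ N) {h : ℝ} (hh0 : 0 < h) (hh1 : h < 1)
    (σ η : Cfg N) :
    PathSum (N := N) h σ η
      = ∑ l ∈ (pathSet_finite hN hh0 hh1 σ η).toFinset, pathWeight N h l := by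
  haveI : Fintype {l : List (Cfg N) // IsPathBetween N h σ η l} :=
    (pathSet_finite hN hh0 hh1 σ η).fintype
  rw [PathSum, tsum_fintype]
  have hmem : ∀ l : List (Cfg N),
      l ∈ (pathSet_finite hN hh0 hh1 σ η).toFinset ↔ IsPathBetween N h σ η l :=
    fun l => (pathSet_finite hN hh0 hh1 σ η).mem_toFinset
  rw [Finset.sum_subtype _ hmem (pathWeight N h)]

lemma singleton_is_path (h : ℝ) (σ : Cfg N) : IsPathBetween N h σ σ [σ] := by
  refine ⟨rfl, rfl, ?_⟩
  exact List.isChain_singleton σ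

lemma path_from_robust (h : ℝ) {σ η : Cfg N} (hrob : robust N h σ)
    {l : List (Cfg N)} (hl : IsPathBetween N h σ η l) : l = [σ] ∧ η = σ := by
  obtain ⟨hhead, hlast, hchain⟩ := hl
  match l with
  | [] => simp at hhead
  | [a] =>
    simp at hhead hlast
    subst hhead; subst hlast; exact ⟨rfl, rfl⟩
  | a :: b :: t =>
    have hhead' : a = σ := by simpa using hhead
    have hstep : stepRel N h σ b := hhead' ▸ (List.isChain_cons_cons.mp hchain).1
    obtain ⟨⟨i, rfl⟩, hle⟩ := hstep
    exact absurd hle (hrob i)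

lemma pathSet_robust_self (hN : 5 ≤ N) {h : ℝ} (hh0 : 0 < h) (hh1 : h < 1)
    {σ : Cfg N} (hrob : robust N h σ) :
    {l : List (Cfg N) | IsPathBetween N h σ σ l} = {[σ]} := by
  ext l
  simp only [Set.mem_setOf_eq, Set.mem_singleton_iff]
  constructor
  · intro hl; exact (path_from_robust h hrob hl).1
  · rintro rfl; exact singleton_is_path h σ

lemma pathSet_robust_ne (hN : 5 ≤ N) {h : ℝ} (hh0 : 0 < h) (hh1 : h < 1)
    {σ η : Cfg N} (hrob : robust N h σ) (hne : η ≠ σ) :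
    {l : List (Cfg N) | IsPathBetween N h σ η l} = ∅ := by
  ext l
  simp only [Set.mem_setOf_eq, Set.mem_empty_iff_false, iff_false]
  intro hl
  exact hne (path_from_robust h hrob hl).2

lemma PathSum_robust_self (hN : 5 ≤ N) {h : ℝ} (hh0 : 0 < h) (hh1 : h < 1)
    {σ : Cfg N} (hrob : robust N h σ) : PathSum (N := N) h σ σ = 1 := by
  rw [PathSum_eq_finset hN hh0 hh1]
  have : (pathSet_finite hN hh0 hh1 σ σ).toFinset = {[σ]} := by
    ext l
    rw [Set.Finite.mem_toFinset]
    rw [pathSet_robust_self hN hh0 hh1 hrob]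
    simp
  rw [this, Finset.sum_singleton]
  simp [pathWeight]

lemma PathSum_robust_ne (hN : 5 ≤ N) {h : ℝ} (hh0 : 0 < h) (hh1 : h < 1)
    {σ η : Cfg N} (hrob : robust N h σ) (hne : η ≠ σ) :
    PathSum (N := N) h σ η = 0 := by
  rw [PathSum_eq_finset hN hh0 hh1]
  have : (pathSet_finite hN hh0 hh1 σ η).toFinset = ∅ := by
    ext l
    rw [Set.Finite.mem_toFinset, pathSet_robust_ne hN hh0 hh1 hrob hne]
    simp
  rw [this, Finset.sum_empty]

end F
section G
set_option linter.unusedSectionVars false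
variable {N : ℕ} [NeZero N]

lemma mem_path_iff (h : ℝ) {σ η : Cfg N} (hne : η ≠ σ) (l : List (Cfg N)) :
    IsPathBetween N h σ η l
      ↔ ∃ i, susceptible N h σ i
          ∧ ∃ t, IsPathBetween N h (flip N σ i) η t ∧ l = σ :: t := by
  constructor
  · rintro ⟨hhead, hlast, hchain⟩
    match l with
    | [] => simp at hhead
    | [a] =>
      simp at hhead hlast
      exact absurd (hlast.symm.trans hhead) hne
    | a :: b :: t' =>
      have ha : a = σ := by simpa using hhead
      subst ha
      have hstep : stepRel N h a b := (List.isChain_cons_cons.mp hchain).1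
      obtain ⟨⟨i, hbi⟩, hle⟩ := hstep
      refine ⟨i, ?_, b :: t', ⟨?_, ?_, (List.isChain_cons_cons.mp hchain).2⟩, rfl⟩
      · unfold susceptible; rw [← hbi]; exact hle
      · simp [hbi]
      · simpa using hlast
  · rintro ⟨i, hsus, t, ⟨hhead, hlast, hchain⟩, rfl⟩
    have htne : t ≠ [] := by intro hc; subst hc; simp at hhead
    obtain ⟨b, t', rfl⟩ := List.exists_cons_of_ne_nil htne
    have hb : b = flip N σ i := by simpa using hhead
    refine ⟨rfl, by simpa using hlast, List.isChain_cons_cons.mpr ⟨⟨⟨i, hb⟩, ?_⟩, hchain⟩⟩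
    rw [hb]; exact hsus

lemma pathFinset_step (hN : 5 ≤ N) {h : ℝ} (hh0 : 0 < h) (hh1 : h < 1)
    {σ η : Cfg N} (hne : η ≠ σ) :
    (pathSet_finite hN hh0 hh1 σ η).toFinset
      = (deltaSet N h σ).biUnion (fun i =>
          ((pathSet_finite hN hh0 hh1 (flip N σ i) η).toFinset).image (σ :: ·)) := by
  ext l
  rw [Set.Finite.mem_toFinset, Finset.mem_biUnion]
  rw [Set.mem_setOf_eq, mem_path_iff h hne l]
  constructor
  · rintro ⟨i, hsus, t, ht, rfl⟩
    refine ⟨i, by simpa [deltaSet] using hsus, ?_⟩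
    rw [Finset.mem_image]
    exact ⟨t, (pathSet_finite hN hh0 hh1 (flip N σ i) η).mem_toFinset.mpr ht, rfl⟩
  · rintro ⟨i, hi, hmem⟩
    rw [Finset.mem_image] at hmem
    obtain ⟨t, ht, rfl⟩ := hmem
    exact ⟨i, by simpa [deltaSet] using hi, t, (pathSet_finite hN hh0 hh1 (flip N σ i) η).mem_toFinset.mp ht, rfl⟩

lemma pathWeight_cons (h : ℝ) (σ : Cfg N) {t : List (Cfg N)} (ht : t ≠ []) :
    pathWeight N h (σ :: t) = ((deltaSet N h σ).card : ℝ)⁻¹ * pathWeight N h t := by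
  unfold pathWeight
  rw [List.dropLast_cons_of_ne_nil ht, List.map_cons, List.prod_cons]

lemma PathSum_rec (hN : 5 ≤ N) {h : ℝ} (hh0 : 0 < h) (hh1 : h < 1)
    {σ η : Cfg N} (hne : η ≠ σ) :
    PathSum (N := N) h σ η
      = ∑ i ∈ deltaSet N h σ,
          ((deltaSet N h σ).card : ℝ)⁻¹ * PathSum (N := N) h (flip N σ i) η := by
  rw [PathSum_eq_finset hN hh0 hh1, pathFinset_step hN hh0 hh1 hne]
  rw [Finset.sum_biUnion ?disj]
  case disj =>
    intro i _ j _ hij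
    simp only [Function.onFun]
    rw [Finset.disjoint_left]
    intro l hl hl'
    rw [Finset.mem_image] at hl hl'
    obtain ⟨t, ht, rfl⟩ := hl
    obtain ⟨t', ht', heq⟩ := hl'
    have htt : t' = t := by injection heq
    subst htt
    rw [(pathSet_finite hN hh0 hh1 (flip N σ i) η).mem_toFinset] at ht
    rw [(pathSet_finite hN hh0 hh1 (flip N σ j) η).mem_toFinset] at ht'
    have h1 := ht.1
    have h2 := ht'.1
    rw [h1] at h2
    exact hij (flip_inj σ (Option.some_injective _ h2))
  refine Finset.sum_congr rfl fun i hi => ?_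
  rw [Finset.sum_image ?inj]
  case inj => intro a _ b _ hab; injection hab
  rw [PathSum_eq_finset hN hh0 hh1, Finset.mul_sum]
  refine Finset.sum_congr rfl fun t ht => ?_
  rw [(pathSet_finite hN hh0 hh1 (flip N σ i) η).mem_toFinset] at ht
  have htne : t ≠ [] := by intro hc; subst hc; simp [IsPathBetween] at ht
  rw [pathWeight_cons h σ htne]

end G
section H
set_option linter.unusedSectionVars false
variable {N : ℕ} [NeZero N]

/-- Number of configurations of strictly smaller energy. -/
noncomputable def lowerCard (h : ℝ) (σ : Cfg N) : ℕ :=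
  (Finset.univ.filter (fun τ : Cfg N => H N h τ < H N h σ)).card

lemma lowerCard_lt (hN : 5 ≤ N) {h : ℝ} (hh0 : 0 < h) (hh1 : h < 1)
    {σ : Cfg N} {i : V N} (hsus : susceptible N h σ i) :
    lowerCard (N := N) h (flip N σ i) < lowerCard (N := N) h σ := by
  have hlt : H N h (flip N σ i) < H N h σ := susceptible_lt hN hh0 hh1 hsus
  apply Finset.card_lt_card
  rw [Finset.ssubset_iff_of_subset]
  · exact ⟨flip N σ i, by simp [hlt], by simp⟩
  · intro τ hτ
    simp only [Finset.mem_filter, Finset.mem_univ, true_and] at hτ ⊢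
    linarith

lemma deltaSet_card_pos {h : ℝ} {σ : Cfg N} (hnrob : ¬ robust N h σ) :
    0 < (deltaSet N h σ).card := by
  rw [Finset.card_pos]
  unfold robust at hnrob
  push_neg at hnrob
  obtain ⟨i, hi⟩ := hnrob
  exact ⟨i, by simp [deltaSet, hi]⟩

lemma Pmat_self_lt_one {h : ℝ} {σ : Cfg N} (hnrob : ¬ robust N h σ) :
    Pmat N h σ σ < 1 := by
  rw [Pmat_self]
  have h1 : (0:ℝ) < ((deltaSet N h σ).card : ℝ) := by
    exact_mod_cast deltaSet_card_pos hnrob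
  have h2 := Npos (N := N)
  have : 0 < ((deltaSet N h σ).card : ℝ) / (N:ℝ)^2 := by positivity
  linarith

lemma one_sub_Pmat_self (h : ℝ) (σ : Cfg N) :
    1 - Pmat N h σ σ = ((deltaSet N h σ).card : ℝ) / (N:ℝ)^2 := by
  rw [Pmat_self]; ring

/-- Main absorption lemma: `κ`-step probabilities converge to the path sums. -/
lemma tendsto_pow_PathSum (hN : 5 ≤ N) {h : ℝ} (hh0 : 0 < h) (hh1 : h < 1)
    {η : Cfg N} (hη : robust N h η) (σ : Cfg N) :
    Tendsto (fun κ : ℕ => (Pmat N h ^ κ) σ η) atTop (𝓝 (PathSum (N := N) h σ η)) := by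
  have main : ∀ n : ℕ, ∀ σ : Cfg N, lowerCard (N := N) h σ ≤ n →
      Tendsto (fun κ : ℕ => (Pmat N h ^ κ) σ η) atTop (𝓝 (PathSum (N := N) h σ η)) := by
    intro n
    induction n with
    | zero =>
      intro σ hσ
      have hrob : robust N h σ := by
        by_contra hnrob
        unfold robust at hnrob
        push_neg at hnrob
        obtain ⟨i, hi⟩ := hnrob
        have := lowerCard_lt hN hh0 hh1 hi
        omega
      have hconst : ∀ κ, (Pmat N h ^ κ) σ η = if η = σ then 1 else 0 :=
        fun κ => pow_robust_row h hrob κ η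
      by_cases hes : η = σ
      · subst hes
        simp only [hconst, if_pos rfl]
        rw [PathSum_robust_self hN hh0 hh1 hrob]
        exact tendsto_const_nhds
      · simp only [hconst, if_neg hes]
        rw [PathSum_robust_ne hN hh0 hh1 hrob hes]
        exact tendsto_const_nhds
    | succ n ih =>
      intro σ hσ
      by_cases hrob : robust N h σ
      · have hconst : ∀ κ, (Pmat N h ^ κ) σ η = if η = σ then 1 else 0 :=
          fun κ => pow_robust_row h hrob κ η
        by_cases hes : η = σ
        · subst hes
          simp only [hconst, if_pos rfl]
          rw [PathSum_robust_self hN hh0 hh1 hrob]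
          exact tendsto_const_nhds
        · simp only [hconst, if_neg hes]
          rw [PathSum_robust_ne hN hh0 hh1 hrob hes]
          exact tendsto_const_nhds
      · -- recursive case
        have hes : η ≠ σ := by
          intro hc; subst hc; exact hrob hη
        set q : ℝ := Pmat N h σ σ with hq
        have hq0 : 0 ≤ q := Pmat_self_nonneg h σ
        have hq1 : q < 1 := Pmat_self_lt_one hrob
        set c : ℕ → ℝ := fun κ =>
          ∑ i ∈ deltaSet N h σ, (1/(N:ℝ)^2) * (Pmat N h ^ κ) (flip N σ i) η with hc
        set y : ℕ → ℝ := fun κ => (Pmat N h ^ κ) σ η with hy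
        have hx : ∀ κ, y (κ+1) = q * y κ + c κ := by
          intro κ
          show (Pmat N h ^ (κ+1)) σ η = _
          rw [pow_apply_succ, Pmat_row_decomp h σ (fun τ => (Pmat N h ^ κ) τ η)]
        have hctend : Tendsto c atTop
            (𝓝 (∑ i ∈ deltaSet N h σ, (1/(N:ℝ)^2) * PathSum (N := N) h (flip N σ i) η)) := by
          refine tendsto_finset_sum _ fun i hi => ?_
          have hsusi : susceptible N h σ i := by simpa [deltaSet] using hi
          have hlow : lowerCard (N := N) h (flip N σ i) ≤ n := by
            have := lowerCard_lt hN hh0 hh1 hsusi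
            omega
          exact (ih (flip N σ i) hlow).const_mul _
        have hxt := tendsto_recur hq0 hq1 hx hctend
        convert hxt using 2
        rw [PathSum_rec hN hh0 hh1 hes, one_sub_Pmat_self]
        have hcard : (0:ℝ) < ((deltaSet N h σ).card : ℝ) := by
          exact_mod_cast deltaSet_card_pos hrob
        have hN2 := Npos (N := N)
        rw [eq_div_iff (by positivity), Finset.sum_mul]
        refine Finset.sum_congr rfl fun i _ => ?_
        field_simp
  exact main (lowerCard (N := N) h σ) σ le_rfl

/-- Main total-absorption lemma: the chain ends in `U` with probability 1. -/
lemma tendsto_pow_total (hN : 5 ≤ N) {h : ℝ} (hh0 : 0 < h) (hh1 : h < 1)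
    (σ : Cfg N) :
    Tendsto (fun κ : ℕ => ∑ η' ∈ Uset N h, (Pmat N h ^ κ) σ η') atTop (𝓝 1) := by
  have main : ∀ n : ℕ, ∀ σ : Cfg N, lowerCard (N := N) h σ ≤ n →
      Tendsto (fun κ : ℕ => ∑ η' ∈ Uset N h, (Pmat N h ^ κ) σ η') atTop (𝓝 1) := by
    intro n
    induction n with
    | zero =>
      intro σ hσ
      have hrob : robust N h σ := by
        by_contra hnrob
        unfold robust at hnrob
        push_neg at hnrob
        obtain ⟨i, hi⟩ := hnrob
        have := lowerCard_lt hN hh0 hh1 hi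
        omega
      have hconst : ∀ κ, (∑ η' ∈ Uset N h, (Pmat N h ^ κ) σ η') = 1 := by
        intro κ
        have : ∀ η' ∈ Uset N h, (Pmat N h ^ κ) σ η' = if η' = σ then 1 else 0 :=
          fun η' _ => pow_robust_row h hrob κ η'
        rw [Finset.sum_congr rfl this, Finset.sum_ite_eq' (Uset N h) σ (fun _ => (1:ℝ))]
        rw [if_pos (by simp [Uset, hrob])]
      simp only [hconst]
      exact tendsto_const_nhds
    | succ n ih =>
      intro σ hσ
      by_cases hrob : robust N h σ
      · have hconst : ∀ κ, (∑ η' ∈ Uset N h, (Pmat N h ^ κ) σ η') = 1 := by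
          intro κ
          have : ∀ η' ∈ Uset N h, (Pmat N h ^ κ) σ η' = if η' = σ then 1 else 0 :=
            fun η' _ => pow_robust_row h hrob κ η'
          rw [Finset.sum_congr rfl this, Finset.sum_ite_eq' (Uset N h) σ (fun _ => (1:ℝ))]
          rw [if_pos (by simp [Uset, hrob])]
        simp only [hconst]
        exact tendsto_const_nhds
      · set q : ℝ := Pmat N h σ σ with hq
        have hq0 : 0 ≤ q := Pmat_self_nonneg h σ
        have hq1 : q < 1 := Pmat_self_lt_one hrob
        set c : ℕ → ℝ := fun κ =>
          ∑ i ∈ deltaSet N h σ, (1/(N:ℝ)^2) * ∑ η' ∈ Uset N h, (Pmat N h ^ κ) (flip N σ i) η'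
          with hc
        set y : ℕ → ℝ := fun κ => ∑ η' ∈ Uset N h, (Pmat N h ^ κ) σ η' with hy
        have hx : ∀ κ, y (κ+1) = q * y κ + c κ := by
          intro κ
          have hswap : (∑ η' ∈ Uset N h, (Pmat N h ^ (κ+1)) σ η')
              = ∑ τ : Cfg N, Pmat N h σ τ * (∑ η' ∈ Uset N h, (Pmat N h ^ κ) τ η') := by
            simp only [pow_apply_succ]
            rw [Finset.sum_comm]
            refine Finset.sum_congr rfl fun τ _ => ?_
            rw [Finset.mul_sum]
          show (∑ η' ∈ Uset N h, (Pmat N h ^ (κ+1)) σ η') = _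
          rw [hswap, Pmat_row_decomp h σ (fun τ => ∑ η' ∈ Uset N h, (Pmat N h ^ κ) τ η')]
        have hctend : Tendsto c atTop
            (𝓝 (∑ i ∈ deltaSet N h σ, (1/(N:ℝ)^2) * 1)) := by
          refine tendsto_finset_sum _ fun i hi => ?_
          have hsusi : susceptible N h σ i := by simpa [deltaSet] using hi
          have hlow : lowerCard (N := N) h (flip N σ i) ≤ n := by
            have := lowerCard_lt hN hh0 hh1 hsusi
            omega
          exact (ih (flip N σ i) hlow).const_mul _
        have hxt := tendsto_recur hq0 hq1 hx hctend
        convert hxt using 2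
        rw [one_sub_Pmat_self]
        have hcard : (0:ℝ) < ((deltaSet N h σ).card : ℝ) := by
          exact_mod_cast deltaSet_card_pos hrob
        have hN2 := Npos (N := N)
        rw [Finset.sum_const, eq_div_iff (by positivity), nsmul_eq_mul]
        field_simp
  exact main (lowerCard (N := N) h σ) σ le_rfl
end H

/-- the limit of `Q_κ(η | σ_{(i,j)}, a)` exists and equals 1 if
`η = σ_{(i,j)}^a`, and equals the sum of the weights of downhill paths from
`σ_{(i,j)}^a` to `η` otherwise. -/
theorem Qkappa_limit_path_sum (N : ℕ) [NeZero N] (hN : 5 ≤ N)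
    (h : ℝ) (hh0 : 0 < h) (hh1 : h < 1)
    (i j : ℕ) (hS : ShatP N (i, j)) (hne : (i, j) ≠ ((0 : ℕ), (0 : ℕ)))
    (a : Act N) (i' j' : ℕ) (hS' : ShatP N (i', j'))
    (η : Cfg N)
    (hη₁ : U1 N h η ∨ η = minusCfg N)
    (hη₂ : downhillOf N h (post N (sigmaRect N i j) a) η)
    (hη₃ : Irel N h η (i', j')) :
    (η = post N (sigmaRect N i j) a →
      Tendsto (fun κ : ℕ => Qκ N h κ (sigmaRect N i j) a η) atTop (𝓝 1)) ∧
    (η ≠ post N (sigmaRect N i j) a →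
      Tendsto (fun κ : ℕ => Qκ N h κ (sigmaRect N i j) a η) atTop
        (𝓝 (∑' l : {l : List (Cfg N) //
              IsPathBetween N h (post N (sigmaRect N i j) a) η l},
            pathWeight N h l.1))) := by
  have hrobη : robust N h η := by
    rcases hη₁ with hU | hm
    · exact hU.1
    · rw [hm]; exact minus_robust hN hh0 hh1
  constructor
  · intro heq
    have hrob0 : robust N h (post N (sigmaRect N i j) a) := by
      rw [← heq]; exact hrobη
    have hconst : ∀ κ, Qκ N h κ (sigmaRect N i j) a η = 1 := by
      intro κ
      unfold Qκ Ptilκ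
      rw [if_pos hrobη]
      rw [pow_robust_row h hrob0 κ η, if_pos heq]
      have hden : (∑ η' ∈ Uset N h, (Pmat N h ^ κ) (post N (sigmaRect N i j) a) η') = 1 := by
        have hterm : ∀ η' ∈ Uset N h, (Pmat N h ^ κ) (post N (sigmaRect N i j) a) η'
            = if η' = post N (sigmaRect N i j) a then 1 else 0 :=
          fun η' _ => pow_robust_row h hrob0 κ η'
        rw [Finset.sum_congr rfl hterm,
          Finset.sum_ite_eq' (Uset N h) (post N (sigmaRect N i j) a) (fun _ => (1:ℝ))]
        rw [if_pos (by simp [Uset, hrob0])]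
      rw [hden]
      norm_num
    simp only [hconst]
    exact tendsto_const_nhds
  · intro hne'
    have hnum := tendsto_pow_PathSum hN hh0 hh1 hrobη (post N (sigmaRect N i j) a)
    have hden := tendsto_pow_total hN hh0 hh1 (h := h) (post N (sigmaRect N i j) a)
    have hdiv := hnum.div hden one_ne_zero
    rw [div_one] at hdiv
    show Tendsto _ atTop (𝓝 (PathSum (N := N) h (post N (sigmaRect N i j) a) η))
    refine hdiv.congr fun κ => ?_
    unfold Qκ Ptilκ
    rw [if_pos hrobη]
    rfl

end IsingS
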